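/- The unit group of O_k = ℤ[√ε]/p^kℤ[√ε] is isomorphic, as a group, to ℤ/p^{k−1}ℤ × ℤ/p^{k−1}ℤ × ℤ/(p² − 1)ℤ. -/

import Mathlib

open Finset in
lemma keybinom {A : Type*} [CommRing A] {p : ℕ} (hp : p.Prime) (hodd : Odd p) {j : ℕ}
    (hj : 1 ≤ j) (t : A) :
    ∃ c, (1 + (p:A)^j * t)^p = 1 + (p:A)^(j+1) * t + (p:A)^(j+2) * c := by
  have hp3 : 3 ≤ p := by
    rcases hodd with ⟨m, hm⟩
    have := hp.two_le; omega
  obtain ⟨q, hq⟩ : ∃ q, p = q + 2 := ⟨p - 2, by omega⟩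
  set x : A := (p:A)^j * t with hx
  have expand : (1 + x)^p = ∑ i ∈ range (p+1), x^i * (p.choose i : A) := by
    rw [add_comm]
    simpa using add_pow x 1 p
  have hsplit : ∑ i ∈ range (p+1), x^i * (p.choose i : A)
      = (∑ i ∈ range (q+1), x^(i+2) * (p.choose (i+2) : A)) + x * p + 1 := by
    rw [hq]
    rw [show q + 2 + 1 = (q + 1) + 1 + 1 by ring]
    rw [Finset.sum_range_succ' _ ((q+1)+1), Finset.sum_range_succ' _ (q+1)]
    simp [← hq]
    try ring
  have hdvd : (p:A)^(j+2) ∣ ∑ i ∈ range (q+1), x^(i+2) * (p.choose (i+2) : A) := by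
    refine Finset.dvd_sum ?_
    intro i hi
    have hi' : i ≤ q := by simpa [Nat.lt_succ_iff] using hi
    rcases eq_or_lt_of_le (show i + 2 ≤ p by omega) with he | hlt
    · have hxp : x^(i+2) = (p:A)^(j*(i+2)) * t^(i+2) := by
        rw [hx, mul_pow, ← pow_mul]
      rw [hxp]
      have : (p:A)^(j+2) ∣ (p:A)^(j*(i+2)) := by
        apply pow_dvd_pow
        nlinarith
      exact (this.mul_right _).mul_right _
    · obtain ⟨m, hm⟩ := hp.dvd_choose_self (by omega : i + 2 ≠ 0) hlt
      have hxp : x^(i+2) = (p:A)^(j*(i+2)) * t^(i+2) := by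
        rw [hx, mul_pow, ← pow_mul]
      rw [hxp, hm]
      push_cast
      have h1 : (p:A)^(j+2) ∣ (p:A)^(j*(i+2)) * (p:A) := by
        rw [← pow_succ]
        apply pow_dvd_pow
        nlinarith
      calc (p:A)^(j+2) ∣ (p:A)^(j*(i+2)) * (p:A) := h1
        _ ∣ (p:A)^(j*(i+2)) * t^(i+2) * ((p:A) * (m:A)) := ⟨t^(i+2) * m, by ring⟩
  obtain ⟨c, hc⟩ := hdvd
  refine ⟨c, ?_⟩
  rw [expand, hsplit, hc, hx]
  ring

lemma keyiter {A : Type*} [CommRing A] {p : ℕ} (hp : p.Prime) (hodd : Odd p) (t s : A) :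
    ∀ m : ℕ, ∃ s', (1 + (p:A) * t + (p:A)^2 * s)^(p^m)
      = 1 + (p:A)^(m+1) * t + (p:A)^(m+2) * s' := by
  intro m
  induction m with
  | zero => exact ⟨s, by norm_num⟩
  | succ m ih =>
    obtain ⟨s', hs'⟩ := ih
    have hform : 1 + (p:A)^(m+1) * t + (p:A)^(m+2) * s'
        = 1 + (p:A)^(m+1) * (t + (p:A) * s') := by ring
    obtain ⟨c, hc⟩ := keybinom hp hodd (by omega : 1 ≤ m + 1) (t + (p:A) * s')
    refine ⟨s' + c, ?_⟩
    rw [show p^(m+1) = p^m * p from pow_succ p m, pow_mul, hs', hform, hc]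
    ring

lemma mem_span_nat {ε : ℤ} {c : ℕ} {x : Zsqrtd ε} :
    x ∈ Ideal.span {((c : ℕ) : Zsqrtd ε)} ↔ (c:ℤ) ∣ x.re ∧ (c:ℤ) ∣ x.im := by
  rw [Ideal.mem_span_singleton]
  have h : ((c : ℕ) : Zsqrtd ε) = ((c : ℤ) : Zsqrtd ε) := by push_cast; rfl
  rw [h, Zsqrtd.intCast_dvd]

lemma quot_bij {ε : ℤ} {c : ℕ} (hc : c ≠ 0) :
    Function.Bijective (fun uv : ZMod c × ZMod c =>
      Ideal.Quotient.mk (Ideal.span {((c : ℕ) : Zsqrtd ε)})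
        ⟨(uv.1.val : ℤ), (uv.2.val : ℤ)⟩) := by
  haveI : NeZero c := ⟨hc⟩
  constructor
  · rintro ⟨u, v⟩ ⟨u', v'⟩ h
    simp only [Ideal.Quotient.mk_eq_mk_iff_sub_mem] at h
    rw [show (⟨(u.val : ℤ), (v.val : ℤ)⟩ - ⟨(u'.val : ℤ), (v'.val : ℤ)⟩ : Zsqrtd ε)
      = ⟨(u.val : ℤ) - u'.val, (v.val : ℤ) - v'.val⟩ from rfl] at h
    rw [mem_span_nat] at h
    obtain ⟨h1, h2⟩ := h
    have e1 : ((u.val : ℤ) : ZMod c) = ((u'.val : ℤ) : ZMod c) := by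
      have := (ZMod.intCast_zmod_eq_zero_iff_dvd _ c).mpr h1
      push_cast at this ⊢
      linear_combination this
    have e2 : ((v.val : ℤ) : ZMod c) = ((v'.val : ℤ) : ZMod c) := by
      have := (ZMod.intCast_zmod_eq_zero_iff_dvd _ c).mpr h2
      push_cast at this ⊢
      linear_combination this
    push_cast at e1 e2
    rw [ZMod.natCast_val, ZMod.natCast_val, ZMod.cast_id, ZMod.cast_id] at e1 e2
    exact Prod.ext e1 e2
  · intro y
    obtain ⟨w, rfl⟩ := Ideal.Quotient.mk_surjective y
    refine ⟨((w.re : ZMod c), (w.im : ZMod c)), ?_⟩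
    simp only [Ideal.Quotient.mk_eq_mk_iff_sub_mem]
    rw [show ((⟨(((w.re : ZMod c)).val : ℤ), (((w.im : ZMod c)).val : ℤ)⟩ : Zsqrtd ε) - w)
      = ⟨(((w.re : ZMod c)).val : ℤ) - w.re, (((w.im : ZMod c)).val : ℤ) - w.im⟩ from rfl]
    rw [mem_span_nat]
    constructor
    · rw [← ZMod.intCast_zmod_eq_zero_iff_dvd]
      push_cast
      rw [ZMod.natCast_val, ZMod.cast_id]
      ring
    · rw [← ZMod.intCast_zmod_eq_zero_iff_dvd]
      push_cast
      rw [ZMod.natCast_val, ZMod.cast_id]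
      ring

lemma card_quot {ε : ℤ} {c : ℕ} (hc : c ≠ 0) :
    Nat.card (Zsqrtd ε ⧸ Ideal.span {((c : ℕ) : Zsqrtd ε)}) = c ^ 2 := by
  rw [← Nat.card_congr (Equiv.ofBijective _ (quot_bij (ε := ε) hc))]
  simp [Nat.card_zmod, sq]

lemma finite_quot {ε : ℤ} {c : ℕ} (hc : c ≠ 0) :
    Finite (Zsqrtd ε ⧸ Ideal.span {((c : ℕ) : Zsqrtd ε)}) := by
  haveI : NeZero c := ⟨hc⟩
  exact Finite.of_equiv _ (Equiv.ofBijective _ (quot_bij (ε := ε) hc))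

lemma span_p_maximal {p : ℕ} (hp : p.Prime) {ε : ℤ} (hε : ¬ IsSquare (ε : ZMod p)) :
    (Ideal.span {((p : ℕ) : Zsqrtd ε)}).IsMaximal := by
  rw [Ideal.isMaximal_iff]
  constructor
  · intro h
    rw [mem_span_nat] at h
    have : (p:ℤ) ∣ 1 := by simpa using h.1
    have := Int.le_of_dvd one_pos this
    have := hp.two_le
    omega
  · intro J x hIJ hx hxJ
    haveI := Fact.mk hp
    have hnd : ¬ (p:ℤ) ∣ x.norm := by
      intro hdvd
      rw [Zsqrtd.norm_def] at hdvd
      have hz : ((x.re * x.re - ε * x.im * x.im : ℤ) : ZMod p) = 0 :=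
        (ZMod.intCast_zmod_eq_zero_iff_dvd _ p).mpr hdvd
      push_cast at hz
      by_cases him : (x.im : ZMod p) = 0
      · have hre : (x.re : ZMod p) = 0 := by
          have : (x.re : ZMod p) * (x.re : ZMod p) = 0 := by
            rw [him] at hz; linear_combination hz
          rcases mul_eq_zero.mp this with h | h <;> exact h
        apply hx
        rw [mem_span_nat]
        constructor
        · rwa [← ZMod.intCast_zmod_eq_zero_iff_dvd]
        · rwa [← ZMod.intCast_zmod_eq_zero_iff_dvd]
      · apply hε
        refine ⟨(x.re : ZMod p) * (x.im : ZMod p)⁻¹, ?_⟩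
        field_simp [him]
        linear_combination -hz
    have hco : IsCoprime (p : ℤ) x.norm := by
      rw [Int.isCoprime_iff_gcd_eq_one]
      have h1 : ¬ p ∣ x.norm.natAbs := by rwa [← Int.natCast_dvd]
      exact Nat.Coprime.gcd_eq_one ((hp.coprime_iff_not_dvd).mpr h1)
    obtain ⟨u, v, huv⟩ := hco
    have hpJ : ((p:ℕ) : Zsqrtd ε) ∈ J := hIJ (Ideal.subset_span rfl)
    have hNJ : ((x.norm : ℤ) : Zsqrtd ε) ∈ J := by
      rw [Zsqrtd.norm_eq_mul_conj]
      exact J.mul_mem_right _ hxJ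
    have : ((u * p + v * x.norm : ℤ) : Zsqrtd ε) ∈ J := by
      push_cast
      refine J.add_mem ?_ ?_
      · have h2 : ((u:ℤ) : Zsqrtd ε) * ((p:ℕ) : Zsqrtd ε) ∈ J := J.mul_mem_left _ hpJ
        convert h2 using 1 <;> (push_cast; try ring)
      · exact J.mul_mem_left _ hNJ
    rwa [huv] at this

/-- homomorphism from `Multiplicative (ZMod n)` sending `1` to an element of order dividing n -/
def powHom {G : Type*} [CommGroup G] (n : ℕ) [NeZero n] (U : G) (hU : U ^ n = 1) :
    Multiplicative (ZMod n) →* G where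
  toFun x := U ^ (Multiplicative.toAdd x).val
  map_one' := by
    show U ^ (ZMod.val (0 : ZMod n)) = 1
    simp [ZMod.val_zero]
  map_mul' x y := by
    have key : ∀ m : ℕ, U ^ (m % n) = U ^ m := fun m => by
      conv_rhs => rw [← Nat.div_add_mod m n]
      rw [pow_add, pow_mul, hU, one_pow, one_mul]
    show U ^ (Multiplicative.toAdd (x*y)).val = _
    have h : Multiplicative.toAdd (x*y) = Multiplicative.toAdd x + Multiplicative.toAdd y := rfl
    rw [h, ZMod.val_add, key, pow_add]

set_option synthInstance.maxHeartbeats 1000000 in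
set_option maxHeartbeats 3200000 in
/-- The unit group of `O_k = ℤ[√ε]/p^kℤ[√ε]` is isomorphic, as a group, to
`ℤ/p^(k-1)ℤ × ℤ/p^(k-1)ℤ × ℤ/(p²-1)ℤ`. -/
theorem units_quotient_zsqrtd_iso (p k : ℕ) (hp : p.Prime) (hodd : Odd p) (hk : 1 ≤ k)
    (ε : ℤ) (hε : ¬ IsSquare (ε : ZMod p)) :
    Nonempty ((Zsqrtd ε ⧸ Ideal.span {(p : Zsqrtd ε) ^ k})ˣ ≃*
      Multiplicative (ZMod (p ^ (k - 1))) × Multiplicative (ZMod (p ^ (k - 1))) ×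
        Multiplicative (ZMod (p ^ 2 - 1))) := by
  classical
  have hp3 : 3 ≤ p := by
    rcases hodd with ⟨m, hm⟩
    have := hp.two_le; omega
  set I : Ideal (Zsqrtd ε) := Ideal.span {(p : Zsqrtd ε) ^ k} with hIdef
  have hIc : I = Ideal.span {((p^k : ℕ) : Zsqrtd ε)} := by rw [hIdef, Nat.cast_pow]
  -- cardinality and finiteness of R
  haveI finR : Finite (Zsqrtd ε ⧸ I) := by
    have := finite_quot (ε := ε) (pow_ne_zero k hp.pos.ne')
    rwa [← hIc] at this
  have cardR : Nat.card (Zsqrtd ε ⧸ I) = p^(2*k) := by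
    have := card_quot (ε := ε) (pow_ne_zero k hp.pos.ne')
    rw [← hIc] at this
    rw [this, ← pow_mul, mul_comm]
  -- the residue field
  set J : Ideal (Zsqrtd ε) := Ideal.span {((p : ℕ) : Zsqrtd ε)} with hJdef
  haveI hJmax : J.IsMaximal := span_p_maximal hp hε
  letI instFF : Field (Zsqrtd ε ⧸ J) := Ideal.Quotient.field J
  haveI finF : Finite (Zsqrtd ε ⧸ J) := by
    have := finite_quot (ε := ε) hp.pos.ne'
    exact this
  have cardF : Nat.card (Zsqrtd ε ⧸ J) = p^2 := card_quot hp.pos.ne'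
  have hle : I ≤ J := by
    rw [hIdef, hJdef]
    exact Ideal.span_singleton_le_span_singleton.mpr (dvd_pow_self _ (by omega))
  set π : (Zsqrtd ε ⧸ I) →+* (Zsqrtd ε ⧸ J) := Ideal.Quotient.factor hle with hπdef
  have hπmk : ∀ w : Zsqrtd ε, π (Ideal.Quotient.mk I w) = Ideal.Quotient.mk J w :=
    fun w => Ideal.Quotient.factor_mk hle w
  have hπsurj : Function.Surjective π := by
    intro y
    obtain ⟨w, rfl⟩ := Ideal.Quotient.mk_surjective y
    exact ⟨Ideal.Quotient.mk I w, hπmk w⟩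
  -- p is nilpotent in R, zero in F
  have hmkp : ((p : ℕ) : Zsqrtd ε ⧸ I) = Ideal.Quotient.mk I ((p:ℕ) : Zsqrtd ε) :=
    (map_natCast (Ideal.Quotient.mk I) p).symm
  have hpR0 : ((p : ℕ) : Zsqrtd ε ⧸ I)^k = 0 := by
    rw [hmkp, ← map_pow, Ideal.Quotient.eq_zero_iff_mem, hIdef]
    exact Ideal.subset_span rfl
  have hpF0 : ((p : ℕ) : Zsqrtd ε ⧸ J) = 0 := by
    rw [show ((p : ℕ) : Zsqrtd ε ⧸ J) = Ideal.Quotient.mk J ((p:ℕ) : Zsqrtd ε) from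
      (map_natCast (Ideal.Quotient.mk J) p).symm, Ideal.Quotient.eq_zero_iff_mem, hJdef]
    exact Ideal.subset_span rfl
  -- kernel elements are nilpotent
  have hnilp : ∀ z : Zsqrtd ε ⧸ I, π z = 0 → z ^ k = 0 := by
    intro z hz
    obtain ⟨w, rfl⟩ := Ideal.Quotient.mk_surjective z
    rw [hπmk, Ideal.Quotient.eq_zero_iff_mem, hJdef, Ideal.mem_span_singleton] at hz
    obtain ⟨v, rfl⟩ := hz
    rw [← map_pow, mul_pow, map_mul, map_pow, ← hmkp, hpR0, zero_mul]
  -- unit criterion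
  have hunit_iff : ∀ x : Zsqrtd ε ⧸ I, IsUnit x ↔ π x ≠ 0 := by
    intro x
    constructor
    · intro hx
      exact (hx.map π).ne_zero
    · intro hx
      have hu : IsUnit (π x) := isUnit_iff_ne_zero.mpr hx
      obtain ⟨y, hy⟩ := hπsurj (π x)⁻¹
      have h1 : π (x * y - 1) = 0 := by
        rw [map_sub, map_mul, hy, map_one, mul_inv_cancel₀ hx, sub_self]
      have h2 : IsNilpotent (x * y - 1) := ⟨k, hnilp _ h1⟩
      have h3 : IsUnit (x * y) := by
        have := h2.isUnit_one_add
        rwa [add_sub_cancel] at this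
      exact isUnit_of_mul_isUnit_left h3
  -- p^(k-1) is nonzero in R
  have hpk1ne : ((p : ℕ) : Zsqrtd ε ⧸ I)^(k-1) ≠ 0 := by
    intro h
    rw [hmkp, ← map_pow, Ideal.Quotient.eq_zero_iff_mem, hIdef, Ideal.mem_span_singleton] at h
    have e1 : ((p^k : ℤ) : Zsqrtd ε) = ((p : ℕ) : Zsqrtd ε)^k := by push_cast; ring
    have e2 : ((p^(k-1) : ℤ) : Zsqrtd ε) = ((p : ℕ) : Zsqrtd ε)^(k-1) := by push_cast; ring
    rw [← e1, ← e2, Zsqrtd.intCast_dvd] at h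
    have h3 : (p:ℤ)^k ∣ (p:ℤ)^(k-1) := by
      have := h.1
      rwa [Zsqrtd.re_intCast] at this
    have h4 : (p:ℕ)^k ∣ (p:ℕ)^(k-1) := by exact_mod_cast h3
    have h5 := Nat.le_of_dvd (by positivity) h4
    have h6 := Nat.pow_lt_pow_right hp.one_lt (show k-1 < k by omega)
    omega
  -- key order computations
  have upow1 : ∀ t s : Zsqrtd ε ⧸ I,
      (1 + ((p:ℕ) : Zsqrtd ε ⧸ I) * t + ((p:ℕ) : Zsqrtd ε ⧸ I)^2 * s)^(p^(k-1)) = 1 := by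
    intro t s
    obtain ⟨s', hs'⟩ := keyiter hp hodd t s (k-1)
    rw [hs', show k-1+1 = k by omega, show k-1+2 = k+1 by omega, pow_succ, hpR0]
    simp
  have uord : ∀ t s : Zsqrtd ε ⧸ I, IsUnit t → ∀ U : (Zsqrtd ε ⧸ I)ˣ,
      (U : Zsqrtd ε ⧸ I) = 1 + ((p:ℕ) : Zsqrtd ε ⧸ I) * t + ((p:ℕ) : Zsqrtd ε ⧸ I)^2 * s →
      orderOf U = p^(k-1) := by
    intro t s ht U hU
    have h1 : U ^ (p^(k-1)) = 1 := by
      apply Units.ext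
      rw [Units.val_pow_eq_pow_val, hU, upow1 t s, Units.val_one]
    have hdvd := orderOf_dvd_of_pow_eq_one h1
    obtain ⟨j, hj, hOrd⟩ := (Nat.dvd_prime_pow hp).mp hdvd
    rcases Nat.lt_or_ge j (k-1) with hlt | hge
    · exfalso
      have hd2 : orderOf U ∣ p^(k-2) := hOrd ▸ pow_dvd_pow p (by omega)
      have h2 : U ^ (p^(k-2)) = 1 := orderOf_dvd_iff_pow_eq_one.mp hd2
      have hval : ((U : Zsqrtd ε ⧸ I))^(p^(k-2)) = 1 := by
        rw [← Units.val_pow_eq_pow_val, h2, Units.val_one]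
      obtain ⟨s', hs'⟩ := keyiter hp hodd t s (k-2)
      rw [hU, hs', show k-2+1 = k-1 by omega, show k-2+2 = k by omega, hpR0] at hval
      have hz : ((p:ℕ) : Zsqrtd ε ⧸ I)^(k-1) * t = 0 := by linear_combination hval
      obtain ⟨tinv, htinv⟩ := ht.exists_right_inv
      apply hpk1ne
      calc ((p:ℕ) : Zsqrtd ε ⧸ I)^(k-1)
          = ((p:ℕ) : Zsqrtd ε ⧸ I)^(k-1) * (t * tinv) := by rw [htinv, mul_one]
        _ = (((p:ℕ) : Zsqrtd ε ⧸ I)^(k-1) * t) * tinv := by ring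
        _ = 0 := by rw [hz, zero_mul]
    · have : j = k - 1 := by omega
      rw [hOrd, this]
  -- cardinality of the kernel of π (additively)
  set πadd : (Zsqrtd ε ⧸ I) →+ (Zsqrtd ε ⧸ J) := π.toAddMonoidHom with hπadd
  have hπaddapp : ∀ z, πadd z = π z := fun _ => rfl
  have hcardK : Nat.card πadd.ker = p^(2*(k-1)) := by
    have h1 := AddSubgroup.card_eq_card_quotient_mul_card_addSubgroup πadd.ker
    have e := QuotientAddGroup.quotientKerEquivOfSurjective πadd (by
      intro y; obtain ⟨x, hx⟩ := hπsurj y; exact ⟨x, hx⟩)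
    have h2 : Nat.card ((Zsqrtd ε ⧸ I) ⧸ πadd.ker) = p^2 := by
      rw [Nat.card_congr e.toEquiv, cardF]
    rw [cardR, h2] at h1
    have hpos : 0 < p^2 := by positivity
    have h3 : p^(2*k) = p^2 * p^(2*(k-1)) := by rw [← pow_add]; congr 1; omega
    exact (Nat.eq_of_mul_eq_mul_left hpos (by rw [← h1, h3])).symm
  -- the unit group surjects onto Fˣ
  set π' : (Zsqrtd ε ⧸ I)ˣ →* (Zsqrtd ε ⧸ J)ˣ := Units.map (π : (Zsqrtd ε ⧸ I) →* (Zsqrtd ε ⧸ J)) with hπ'def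
  have hπ'surj : Function.Surjective π' := by
    intro v
    obtain ⟨x, hx⟩ := hπsurj (v : Zsqrtd ε ⧸ J)
    have hxu : IsUnit x := (hunit_iff x).mpr (by rw [hx]; exact v.ne_zero)
    refine ⟨hxu.unit, Units.ext ?_⟩
    rw [Units.coe_map]
    simp only [MonoidHom.coe_coe, IsUnit.unit_spec]
    exact hx
  -- kernel of π' is in bijection with the additive kernel of π
  have Kbij : (MonoidHom.ker π') ≃ πadd.ker := by
    refine ⟨fun u => ⟨((u : (Zsqrtd ε ⧸ I)ˣ) : Zsqrtd ε ⧸ I) - 1, ?_⟩,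
      fun z => ⟨?_, ?_⟩, ?_, ?_⟩
    · have hu : π' (u : (Zsqrtd ε ⧸ I)ˣ) = 1 := u.2
      have hval : π ((u : (Zsqrtd ε ⧸ I)ˣ) : Zsqrtd ε ⧸ I) = 1 := by
        have := congrArg (Units.val) hu
        rwa [Units.coe_map] at this
      rw [AddMonoidHom.mem_ker, hπaddapp, map_sub, hval, map_one, sub_self]
    · -- the unit 1 + z
      exact ((hunit_iff (1 + (z : Zsqrtd ε ⧸ I))).mpr (by
        have hz : π (z : Zsqrtd ε ⧸ I) = 0 := z.2
        rw [map_add, map_one, hz, add_zero]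
        exact one_ne_zero)).unit
    · rw [MonoidHom.mem_ker]
      apply Units.ext
      rw [Units.coe_map]
      simp only [MonoidHom.coe_coe, IsUnit.unit_spec, Units.val_one]
      have hz : π (z : Zsqrtd ε ⧸ I) = 0 := z.2
      rw [map_add, map_one, hz, add_zero]
    · intro u
      apply Subtype.ext
      apply Units.ext
      simp only [IsUnit.unit_spec]
      ring
    · intro z
      apply Subtype.ext
      simp only [IsUnit.unit_spec]
      ring
  have hcardkerπ' : Nat.card (MonoidHom.ker π') = p^(2*(k-1)) := by
    rw [Nat.card_congr Kbij]; exact hcardK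
  have hcardFx : Nat.card (Zsqrtd ε ⧸ J)ˣ = p^2 - 1 := by
    rw [Nat.card_units, cardF]
  have hcardRx : Nat.card (Zsqrtd ε ⧸ I)ˣ = p^(2*(k-1)) * (p^2-1) := by
    have h1 := Subgroup.card_eq_card_quotient_mul_card_subgroup (MonoidHom.ker π')
    have e := QuotientGroup.quotientKerEquivOfSurjective π' hπ'surj
    rw [Nat.card_congr e.toEquiv, hcardFx, hcardkerπ'] at h1
    rw [h1, mul_comm]
  -- Teichmueller-type generator of order p^2 - 1
  have h9 : 9 ≤ p^2 := by nlinarith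
  obtain ⟨ζbar, hζbar⟩ := IsCyclic.exists_generator (α := (Zsqrtd ε ⧸ J)ˣ)
  have hordζbar : orderOf ζbar = p^2 - 1 := by
    rw [orderOf_eq_card_of_forall_mem_zpowers hζbar, hcardFx]
  obtain ⟨u₀, hu₀⟩ := hπ'surj ζbar
  set ζu : (Zsqrtd ε ⧸ I)ˣ := u₀ ^ (p^(2*(k-1))) with hζudef
  have hζ1 : ζu ^ (p^2 - 1) = 1 := by
    rw [hζudef, ← pow_mul, ← hcardRx]
    exact pow_card_eq_one'
  have hordπζ : orderOf (π' ζu) = p^2 - 1 := by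
    have hmap : π' ζu = ζbar ^ (p^(2*(k-1))) := by rw [hζudef, map_pow, hu₀]
    have hnd : ¬ p ∣ p^2 - 1 := by
      intro hdd
      have h1 : p ∣ p^2 - (p^2 - 1) := Nat.dvd_sub (dvd_pow_self p (by norm_num)) hdd
      rw [Nat.sub_sub_self (by omega)] at h1
      have := Nat.le_of_dvd one_pos h1
      omega
    have hco : Nat.Coprime (p^2-1) (p^(2*(k-1))) :=
      Nat.Coprime.pow_right _ (Nat.coprime_comm.mp ((hp.coprime_iff_not_dvd).mpr hnd))
    rw [hmap, orderOf_pow, hordζbar, hco.gcd_eq_one, Nat.div_one]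
  -- the square root of ε in R
  set sq : Zsqrtd ε ⧸ I := Ideal.Quotient.mk I ⟨0,1⟩ with hsqdef
  have hsqmul : (⟨0,1⟩ * ⟨0,1⟩ : Zsqrtd ε) = ((ε : ℤ) : Zsqrtd ε) := by
    ext <;> simp
  have hsq2 : sq * sq = ((ε : ℤ) : Zsqrtd ε ⧸ I) := by
    rw [hsqdef, ← map_mul, hsqmul, map_intCast]
  have hεunit : IsUnit ((ε : ℤ) : Zsqrtd ε ⧸ I) := by
    apply (hunit_iff _).mpr
    rw [map_intCast]
    intro h0
    have h1 : Ideal.Quotient.mk J ((ε : ℤ) : Zsqrtd ε) = 0 := by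
      rw [map_intCast]; exact h0
    rw [Ideal.Quotient.eq_zero_iff_mem, hJdef, mem_span_nat] at h1
    have h2 : (p:ℤ) ∣ ε := by
      have := h1.1
      rwa [Zsqrtd.re_intCast] at this
    apply hε
    refine ⟨0, ?_⟩
    have : (ε : ZMod p) = 0 := (ZMod.intCast_zmod_eq_zero_iff_dvd _ _).mpr h2
    rw [this, mul_zero]
  have hsqunit : IsUnit sq := isUnit_of_mul_isUnit_left (hsq2 ▸ hεunit)
  -- the unipotent generators
  have hg1u : IsUnit (1 + ((p:ℕ) : Zsqrtd ε ⧸ I) * 1 + ((p:ℕ) : Zsqrtd ε ⧸ I)^2 * 0) :=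
    IsUnit.of_pow_eq_one (upow1 1 0) (pow_ne_zero _ hp.pos.ne')
  set g₁ : (Zsqrtd ε ⧸ I)ˣ := hg1u.unit with hg₁def
  have hg₁val : (g₁ : Zsqrtd ε ⧸ I)
      = 1 + ((p:ℕ) : Zsqrtd ε ⧸ I) * 1 + ((p:ℕ) : Zsqrtd ε ⧸ I)^2 * 0 := hg1u.unit_spec
  have hg₁ord : orderOf g₁ = p^(k-1) := uord 1 0 isUnit_one g₁ hg₁val
  have hg2u : IsUnit (1 + ((p:ℕ) : Zsqrtd ε ⧸ I) * sq + ((p:ℕ) : Zsqrtd ε ⧸ I)^2 * 0) :=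
    IsUnit.of_pow_eq_one (upow1 sq 0) (pow_ne_zero _ hp.pos.ne')
  set g₂ : (Zsqrtd ε ⧸ I)ˣ := hg2u.unit with hg₂def
  have hg₂val : (g₂ : Zsqrtd ε ⧸ I)
      = 1 + ((p:ℕ) : Zsqrtd ε ⧸ I) * sq + ((p:ℕ) : Zsqrtd ε ⧸ I)^2 * 0 := hg2u.unit_spec
  -- conjugation on R
  have hstar : ∀ a ∈ I, ((Ideal.Quotient.mk I).comp (starRingEnd (Zsqrtd ε))) a = 0 := by
    intro a ha
    rw [hIdef, Ideal.mem_span_singleton] at ha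
    obtain ⟨b, rfl⟩ := ha
    have h1 : (starRingEnd (Zsqrtd ε)) (((p:ℕ) : Zsqrtd ε)^k * b)
        = ((p:ℕ) : Zsqrtd ε)^k * (starRingEnd (Zsqrtd ε)) b := by
      rw [map_mul, map_pow, map_natCast]
    rw [RingHom.comp_apply, h1, map_mul, map_pow, ← hmkp, hpR0, zero_mul]
  set σ : (Zsqrtd ε ⧸ I) →+* (Zsqrtd ε ⧸ I) :=
    Ideal.Quotient.lift I ((Ideal.Quotient.mk I).comp (starRingEnd (Zsqrtd ε))) hstar with hσdef
  have hσmk : ∀ w : Zsqrtd ε, σ (Ideal.Quotient.mk I w) = Ideal.Quotient.mk I (star w) :=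
    fun w => Ideal.Quotient.lift_mk I _ hstar
  set σ' : (Zsqrtd ε ⧸ I)ˣ →* (Zsqrtd ε ⧸ I)ˣ :=
    Units.map (σ : (Zsqrtd ε ⧸ I) →* (Zsqrtd ε ⧸ I)) with hσ'def
  have hσsq : σ sq = -sq := by
    rw [hsqdef, hσmk]
    have h1 : (star ⟨0,1⟩ : Zsqrtd ε) = -⟨0,1⟩ := by ext <;> simp
    rw [h1, map_neg]
  have hσ'g₁ : σ' g₁ = g₁ := by
    apply Units.ext
    rw [hσ'def, Units.coe_map]
    simp only [MonoidHom.coe_coe, hg₁val, map_add, map_one, map_mul, map_pow, map_natCast,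
      map_zero, mul_zero, add_zero]
  have hσ'g₂val : ((σ' g₂ : (Zsqrtd ε ⧸ I)ˣ) : Zsqrtd ε ⧸ I)
      = 1 + ((p:ℕ) : Zsqrtd ε ⧸ I) * (-sq) + ((p:ℕ) : Zsqrtd ε ⧸ I)^2 * 0 := by
    rw [hσ'def, Units.coe_map]
    simp only [MonoidHom.coe_coe, hg₂val, map_add, map_one, map_mul, map_pow, map_natCast,
      map_zero, mul_zero, add_zero, hσsq]
  -- images of generators under π
  have hπg₁ : π' g₁ = 1 := by
    apply Units.ext
    rw [hπ'def, Units.coe_map]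
    simp only [MonoidHom.coe_coe, hg₁val, Units.val_one, map_add, map_one, map_mul, map_pow,
      map_natCast, map_zero, mul_zero, add_zero, hpF0, zero_mul]
  have hπg₂ : π' g₂ = 1 := by
    apply Units.ext
    rw [hπ'def, Units.coe_map]
    simp only [MonoidHom.coe_coe, hg₂val, Units.val_one, map_add, map_one, map_mul, map_pow,
      map_natCast, map_zero, mul_zero, add_zero, hpF0, zero_mul]
  -- the three homomorphisms
  haveI nz1 : NeZero (p^(k-1)) := ⟨pow_ne_zero _ hp.pos.ne'⟩
  haveI nz2 : NeZero (p^2 - 1) := ⟨by omega⟩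
  have hg₁pow : g₁ ^ (p^(k-1)) = 1 := orderOf_dvd_iff_pow_eq_one.mp (by rw [hg₁ord])
  have hg₂pow : g₂ ^ (p^(k-1)) = 1 := by
    apply Units.ext
    rw [Units.val_pow_eq_pow_val, hg₂val, upow1 sq 0, Units.val_one]
  set φ₁ := powHom (p^(k-1)) g₁ hg₁pow with hφ₁def
  set φ₂ := powHom (p^(k-1)) g₂ hg₂pow with hφ₂def
  set φ₃ := powHom (p^2-1) ζu hζ1 with hφ₃def
  set Φ : (Multiplicative (ZMod (p ^ (k - 1))) × Multiplicative (ZMod (p ^ (k - 1))) ×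
        Multiplicative (ZMod (p ^ 2 - 1))) →* (Zsqrtd ε ⧸ I)ˣ :=
    { toFun := fun x => φ₁ x.1 * φ₂ x.2.1 * φ₃ x.2.2,
      map_one' := by
        show φ₁ 1 * φ₂ 1 * φ₃ 1 = 1
        rw [map_one, map_one, map_one, mul_one, mul_one],
      map_mul' := fun x y => by
        show φ₁ (x.1 * y.1) * φ₂ (x.2.1 * y.2.1) * φ₃ (x.2.2 * y.2.2) =
          (φ₁ x.1 * φ₂ x.2.1 * φ₃ x.2.2) * (φ₁ y.1 * φ₂ y.2.1 * φ₃ y.2.2)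
        rw [map_mul, map_mul, map_mul, mul_mul_mul_comm (φ₁ x.1) (φ₁ y.1),
          mul_mul_mul_comm (φ₁ x.1 * φ₂ x.2.1) (φ₁ y.1 * φ₂ y.2.1)] } with hΦdef
  have hinj : Function.Injective Φ := by
    rw [injective_iff_map_eq_one]
    rintro ⟨a, b, c⟩ hx0
    have hx : g₁ ^ (Multiplicative.toAdd a).val * g₂ ^ (Multiplicative.toAdd b).val *
        ζu ^ (Multiplicative.toAdd c).val = 1 := hx0
    -- step 1 : project to the residue field
    have h1 := congrArg π' hx
    simp only [map_mul, map_pow, hπg₁, hπg₂, one_pow, one_mul, map_one] at h1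
    have hC : (Multiplicative.toAdd c).val = 0 :=
      Nat.eq_zero_of_dvd_of_lt (by have hdd := orderOf_dvd_of_pow_eq_one h1; rwa [hordπζ] at hdd) (ZMod.val_lt _)
    rw [hC, pow_zero, mul_one] at hx
    -- step 2 : apply conjugation
    have h2 := congrArg σ' hx
    simp only [map_mul, map_pow, hσ'g₁, map_one] at h2
    have h3 : g₂ ^ (Multiplicative.toAdd b).val = (σ' g₂) ^ (Multiplicative.toAdd b).val :=
      mul_left_cancel (hx.trans h2.symm)
    have h4 : (g₂ * (σ' g₂)⁻¹) ^ (Multiplicative.toAdd b).val = 1 := by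
      rw [mul_pow, inv_pow, ← h3, mul_inv_cancel]
    -- the element w = g₂ / σ(g₂) has the right shape
    set v : Zsqrtd ε ⧸ I := (((σ' g₂)⁻¹ : (Zsqrtd ε ⧸ I)ˣ) : Zsqrtd ε ⧸ I) with hvdef
    have hv : v * (1 + ((p:ℕ) : Zsqrtd ε ⧸ I) * (-sq) + ((p:ℕ) : Zsqrtd ε ⧸ I)^2 * 0) = 1 := by
      have h5 := congrArg Units.val (inv_mul_cancel (σ' g₂))
      rw [Units.val_mul, hσ'g₂val] at h5
      exact h5
    have hwval : ((g₂ * (σ' g₂)⁻¹ : (Zsqrtd ε ⧸ I)ˣ) : Zsqrtd ε ⧸ I)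
        = 1 + ((p:ℕ) : Zsqrtd ε ⧸ I) * (sq + sq * v)
          + ((p:ℕ) : Zsqrtd ε ⧸ I)^2 * (sq^2 * v) := by
      rw [Units.val_mul, hg₂val, ← hvdef]
      linear_combination (1 + ((p:ℕ) : Zsqrtd ε ⧸ I) * sq) * hv
    have hv' : v = 1 + ((p:ℕ) : Zsqrtd ε ⧸ I) * (sq * v) := by linear_combination hv
    have h2u : IsUnit (2 + ((p:ℕ) : Zsqrtd ε ⧸ I) * (sq * v)) := by
      apply (hunit_iff _).mpr
      have hπ2 : π (2 + ((p:ℕ) : Zsqrtd ε ⧸ I) * (sq * v)) = 2 := by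
        rw [map_add, map_mul, map_natCast, hpF0, zero_mul, add_zero, map_ofNat]
      rw [hπ2]
      intro h20
      have h21 : Ideal.Quotient.mk J ((2:ℕ) : Zsqrtd ε) = 0 := by
        rw [map_natCast]
        exact_mod_cast h20
      rw [Ideal.Quotient.eq_zero_iff_mem, hJdef, mem_span_nat] at h21
      have h22 : (p:ℤ) ∣ ((2:ℕ):ℤ) := by
        have := h21.1
        rwa [Zsqrtd.re_natCast] at this
      have := Int.le_of_dvd (by norm_num) h22
      omega
    have ht : IsUnit (sq + sq * v) := by
      have he : sq + sq * v = sq * (2 + ((p:ℕ) : Zsqrtd ε ⧸ I) * (sq * v)) := by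
        linear_combination sq * hv'
      rw [he]
      exact hsqunit.mul h2u
    have hword : orderOf (g₂ * (σ' g₂)⁻¹) = p^(k-1) := uord _ _ ht _ hwval
    have hB : (Multiplicative.toAdd b).val = 0 :=
      Nat.eq_zero_of_dvd_of_lt (by have hdd := orderOf_dvd_of_pow_eq_one h4; rwa [hword] at hdd) (ZMod.val_lt _)
    rw [hB, pow_zero, mul_one] at hx
    have hA : (Multiplicative.toAdd a).val = 0 :=
      Nat.eq_zero_of_dvd_of_lt (by have hdd := orderOf_dvd_of_pow_eq_one hx; rwa [hg₁ord] at hdd) (ZMod.val_lt _)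
    have ha : a = 1 := toAdd_eq_zero.mp ((ZMod.val_eq_zero _).mp hA)
    have hb : b = 1 := toAdd_eq_zero.mp ((ZMod.val_eq_zero _).mp hB)
    have hc : c = 1 := toAdd_eq_zero.mp ((ZMod.val_eq_zero _).mp hC)
    rw [ha, hb, hc]
    rfl
  -- cardinalities agree
  have hcardD : Nat.card (Multiplicative (ZMod (p ^ (k - 1))) × Multiplicative (ZMod (p ^ (k - 1))) ×
      Multiplicative (ZMod (p ^ 2 - 1))) = p^(2*(k-1)) * (p^2-1) := by
    rw [Nat.card_prod, Nat.card_prod]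
    have e1 : Nat.card (Multiplicative (ZMod (p^(k-1)))) = p^(k-1) := by
      rw [Nat.card_congr Multiplicative.toAdd, Nat.card_zmod]
    have e3 : Nat.card (Multiplicative (ZMod (p^2-1))) = p^2-1 := by
      rw [Nat.card_congr Multiplicative.toAdd, Nat.card_zmod]
    rw [e1, e3, ← mul_assoc, ← pow_add]
    congr 2
    omega
  have hbij : Function.Bijective Φ :=
    (Nat.bijective_iff_injective_and_card Φ).mpr ⟨hinj, by rw [hcardD, hcardRx]⟩
  exact ⟨(MulEquiv.ofBijective Φ hbij).symm⟩
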